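/- Let p be an odd prime, let a ∈ 𝔽_p with a ≠ 0, and let S = {(x, y) ∈ 𝔽_p × 𝔽_p : y² = a·x² + 1} with the addition law (x₁, y₁) + (x₂, y₂) = (x₁y₂ + y₁x₂, y₁y₂ + a·x₁x₂). Then S is cyclic under this operation: there exists g ∈ S such that every element of S is obtained from the identity (0, 1) by finitely many additions of g, i.e., for every Q ∈ S there exists k ∈ ℕ with Q = ((·) + g)^[k] (0, 1). Moreover the number of elements of S equals p − (a/p), where (a/p) is the Legendre symbol of any integer lift of a. -/

import Mathlib

open Polynomial Finset

section QuadCurveAux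

variable {p : ℕ} [Fact p.Prime] (a : ZMod p)

/-- The points of the conic `y² = a x² + 1`. -/
def QPt (a : ZMod p) : Type := {P : ZMod p × ZMod p // P.2 ^ 2 = a * P.1 ^ 2 + 1}

namespace QPt

instance : Fintype (QPt a) := Subtype.fintype _

instance : Mul (QPt a) :=
  ⟨fun P Q => ⟨(P.val.1 * Q.val.2 + P.val.2 * Q.val.1,
      P.val.2 * Q.val.2 + a * P.val.1 * Q.val.1), by
    linear_combination (Q.val.2 ^ 2 - a * Q.val.1 ^ 2) * P.prop + Q.prop⟩⟩

instance : One (QPt a) := ⟨⟨(0, 1), by ring⟩⟩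

instance : Inv (QPt a) := ⟨fun P => ⟨(-P.val.1, P.val.2), by linear_combination P.prop⟩⟩

@[simp] lemma mul_fst (P Q : QPt a) :
    (P * Q).val.1 = P.val.1 * Q.val.2 + P.val.2 * Q.val.1 := rfl
@[simp] lemma mul_snd (P Q : QPt a) :
    (P * Q).val.2 = P.val.2 * Q.val.2 + a * P.val.1 * Q.val.1 := rfl
@[simp] lemma one_fst : (1 : QPt a).val.1 = 0 := rfl
@[simp] lemma one_snd : (1 : QPt a).val.2 = 1 := rfl
@[simp] lemma inv_fst (P : QPt a) : (P⁻¹).val.1 = -P.val.1 := rfl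
@[simp] lemma inv_snd (P : QPt a) : (P⁻¹).val.2 = P.val.2 := rfl

instance commGroup : CommGroup (QPt a) where
  mul_assoc P Q R := Subtype.ext (Prod.ext (by simp; ring) (by simp; ring))
  one_mul P := Subtype.ext (Prod.ext (by simp) (by simp))
  mul_one P := Subtype.ext (Prod.ext (by simp) (by simp))
  inv_mul_cancel P := Subtype.ext (Prod.ext (by simp; ring)
    (by simp; linear_combination P.prop))
  mul_comm P Q := Subtype.ext (Prod.ext (by simp; ring) (by simp; ring))

/-- The multiplicative embedding of the conic into a ring containing a square root of `a`. -/
def toRing {R : Type*} [CommRing R] (f : ZMod p →+* R) (r : R) (hr : r ^ 2 = f a) :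
    QPt a →* R where
  toFun P := f P.val.2 + f P.val.1 * r
  map_one' := by simp
  map_mul' P Q := by
    simp only [mul_fst, mul_snd, map_add, map_mul]
    linear_combination (-(f P.val.1 * f Q.val.1)) * hr

lemma isCyclic (hp : p ≠ 2) (ha : a ≠ 0) : IsCyclic (QPt a) := by
  have hp2 : (2 : ZMod p) ≠ 0 := by
    have hnd : ¬ (p ∣ 2) := fun h => hp ((Nat.prime_dvd_prime_iff_eq (Fact.out) Nat.prime_two).mp h)
    intro h2
    exact hnd ((ZMod.natCast_eq_zero_iff 2 p).mp (by exact_mod_cast h2))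
  by_cases hsq : IsSquare a
  · obtain ⟨d, hd⟩ := hsq
    have hd2' : d ^ 2 = a := by rw [hd]; ring
    have hd2 : d ^ 2 = (RingHom.id (ZMod p)) a := by rwa [RingHom.id_apply]
    have hdne : d ≠ 0 := by rintro rfl; exact ha (by rw [hd]; ring)
    apply isCyclic_of_subgroup_isDomain (toRing a (RingHom.id (ZMod p)) d hd2)
    intro P Q h
    simp only [toRing, MonoidHom.coe_mk, OneHom.coe_mk, RingHom.id_apply] at h
    have hP1 : (P.val.2 + P.val.1 * d) * (P.val.2 - P.val.1 * d) = 1 := by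
      linear_combination P.prop - P.val.1 ^ 2 * hd2'
    have hQ1 : (Q.val.2 + Q.val.1 * d) * (Q.val.2 - Q.val.1 * d) = 1 := by
      linear_combination Q.prop - Q.val.1 ^ 2 * hd2'
    have ht : P.val.2 + P.val.1 * d ≠ 0 := by
      intro h0; rw [h0, zero_mul] at hP1; exact zero_ne_one hP1
    have hu : P.val.2 - P.val.1 * d = Q.val.2 - Q.val.1 * d := by
      apply mul_left_cancel₀ ht
      rw [hP1, h, hQ1]
    have hy : P.val.2 = Q.val.2 := by
      apply mul_left_cancel₀ hp2
      linear_combination h + hu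
    have hx : P.val.1 = Q.val.1 := by
      apply mul_right_cancel₀ hdne
      linear_combination h - hy
    exact Subtype.ext (Prod.ext hx hy)
  · have hirr : Irreducible (X ^ 2 - C a : (ZMod p)[X]) := by
      apply X_pow_sub_C_irreducible_of_prime Nat.prime_two
      intro b hb
      exact hsq ⟨b, by rw [← hb]; ring⟩
    haveI : Fact (Irreducible (X ^ 2 - C a : (ZMod p)[X])) := ⟨hirr⟩
    set R := AdjoinRoot (X ^ 2 - C a : (ZMod p)[X])
    have hr : (AdjoinRoot.root (X ^ 2 - C a : (ZMod p)[X])) ^ 2 = AdjoinRoot.of _ a := by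
      have h0 := AdjoinRoot.mk_self (f := (X ^ 2 - C a : (ZMod p)[X]))
      rw [map_sub, map_pow, AdjoinRoot.mk_X, AdjoinRoot.mk_C, sub_eq_zero] at h0
      exact h0
    have hofinj : Function.Injective (AdjoinRoot.of (X ^ 2 - C a : (ZMod p)[X])) :=
      (AdjoinRoot.of (X ^ 2 - C a : (ZMod p)[X])).injective
    apply isCyclic_of_subgroup_isDomain (toRing a (AdjoinRoot.of _) _ hr)
    intro P Q h
    set f := AdjoinRoot.of (X ^ 2 - C a : (ZMod p)[X])
    set r := AdjoinRoot.root (X ^ 2 - C a : (ZMod p)[X])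
    simp only [toRing, MonoidHom.coe_mk, OneHom.coe_mk] at h
    by_cases hx : P.val.1 = Q.val.1
    · have hy : P.val.2 = Q.val.2 := by
        apply hofinj
        have := h
        rw [hx] at this
        exact add_right_cancel this
      exact Subtype.ext (Prod.ext hx hy)
    · exfalso
      set c := (P.val.2 - Q.val.2) / (Q.val.1 - P.val.1) with hc
      have hxne : Q.val.1 - P.val.1 ≠ 0 := sub_ne_zero.mpr (fun h' => hx h'.symm)
      have hrc : r = f c := by
        have h1 : f (P.val.2 - Q.val.2) = f (Q.val.1 - P.val.1) * r := by
          rw [map_sub, map_sub]; linear_combination h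
        have h2 : f (Q.val.1 - P.val.1) * f c = f (P.val.2 - Q.val.2) := by
          rw [← map_mul]
          congr 1
          rw [hc]; exact mul_div_cancel₀ _ hxne
        have hfne : f (Q.val.1 - P.val.1) ≠ 0 := by
          intro h0
          exact hxne (hofinj (by rw [map_zero]; exact h0))
        apply mul_left_cancel₀ hfne
        rw [← h1, h2]
      apply hsq
      refine ⟨c, ?_⟩
      have : f a = f (c * c) := by
        rw [← hr, hrc, map_mul, ← pow_two]
      exact hofinj this

end QPt

lemma qpt_card (hp : p ≠ 2) (ha : a ≠ 0) :
    (((univ.filter (fun P : ZMod p × ZMod p => P.2 ^ 2 = a * P.1 ^ 2 + 1)).card : ℤ))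
      = p - quadraticChar (ZMod p) a := by
  have hchar : ringChar (ZMod p) ≠ 2 := by
    rw [ZMod.ringChar_zmod_n]; exact hp
  set χ := quadraticChar (ZMod p) with hχ
  -- the number of square roots of `c`
  have hcard : ∀ c : ZMod p,
      (((univ.filter (fun y : ZMod p => y ^ 2 = c)).card : ℤ)) = χ c + 1 := by
    intro c
    have := quadraticChar_card_sqrts hchar c
    rwa [Set.toFinset_setOf] at this
  -- slice the count by the first coordinate
  have step1 : (univ.filter (fun P : ZMod p × ZMod p => P.2 ^ 2 = a * P.1 ^ 2 + 1)).card
      = ∑ x : ZMod p, (univ.filter (fun y : ZMod p => y ^ 2 = a * x ^ 2 + 1)).card := by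
    rw [Finset.card_eq_sum_card_fiberwise
      (f := fun P : ZMod p × ZMod p => P.1) (t := univ) (fun _ _ => mem_univ _)]
    refine Finset.sum_congr rfl fun x _ => ?_
    refine Finset.card_bij' (fun P _ => P.2) (fun y _ => (x, y)) ?_ ?_ ?_ ?_
    · intro P hP
      simp only [mem_filter, mem_univ, true_and] at hP ⊢
      rw [← hP.2]; exact hP.1
    · intro y hy
      simp only [mem_filter, mem_univ, true_and] at hy ⊢
      exact ⟨hy, trivial⟩
    · intro P hP
      simp only [mem_filter, mem_univ, true_and] at hP
      exact Prod.ext hP.2.symm rfl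
    · intro y hy
      rfl
  -- the key character sum
  have hB : ∑ t : ZMod p, χ (a * t + 1) = 0 := by
    rw [← quadraticChar_sum_zero hchar, ← hχ]
    exact Fintype.sum_equiv ((Equiv.mulLeft₀ a ha).trans (Equiv.addRight 1)) _ _ (fun t => rfl)
  have hane : χ a ≠ 0 := fun h => ha (quadraticChar_eq_zero_iff.mp h)
  have hainv : χ a⁻¹ = χ a := by
    apply mul_right_cancel₀ hane
    rw [← map_mul, inv_mul_cancel₀ ha, map_one]
    have := quadraticChar_sq_one (F := ZMod p) ha
    rw [pow_two] at this
    exact this.symm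
  have hC : ∑ t : ZMod p, χ t * χ (a * t + 1) = - χ a := by
    have hai : (-a⁻¹ : ZMod p) ≠ 0 := by
      simp [inv_ne_zero ha]
    have reindex : ∑ s : ZMod p, χ (-a⁻¹ * s) * χ (a * (-a⁻¹ * s) + 1)
        = ∑ t : ZMod p, χ t * χ (a * t + 1) :=
      Fintype.sum_equiv (Equiv.mulLeft₀ (-a⁻¹) hai) _ _ (fun s => rfl)
    rw [← reindex]
    have hterm : ∀ s : ZMod p, χ (-a⁻¹ * s) * χ (a * (-a⁻¹ * s) + 1)
        = (χ (-1) * χ a⁻¹) * (χ s * χ (1 - s)) := by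
      intro s
      have h2 : (a * (-a⁻¹ * s) + 1 : ZMod p) = 1 - s := by
        field_simp
        ring
      rw [h2, show (-a⁻¹ * s : ZMod p) = (-1) * (a⁻¹ * s) by ring, map_mul, map_mul]
      ring
    simp only [hterm]
    rw [← Finset.mul_sum]
    have hj : ∑ s : ZMod p, χ s * χ (1 - s) = - χ (-1) := by
      have := jacobiSum_nontrivial_inv (quadraticChar_ne_one hchar)
      rw [(quadraticChar_isQuadratic (ZMod p)).inv] at this
      exact this
    rw [hj, hainv]
    have hm1 : χ (-1) * χ (-1) = 1 := by
      rw [← map_mul]; norm_num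
    linear_combination (- (χ a)) * hm1
  -- pass from squares to a sum over all t with multiplicity χ t + 1
  have hA : ∑ x : ZMod p, χ (a * x ^ 2 + 1)
      = ∑ t : ZMod p, (χ t + 1) * χ (a * t + 1) := by
    have hfib := Finset.sum_fiberwise_of_maps_to' (s := (univ : Finset (ZMod p)))
      (t := (univ : Finset (ZMod p))) (g := fun x : ZMod p => x ^ 2)
      (fun i _ => mem_univ _) (fun t => χ (a * t + 1))
    rw [← hfib]
    refine Finset.sum_congr rfl fun t _ => ?_
    rw [Finset.sum_const, nsmul_eq_mul]
    congr 1
    exact hcard t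
  have key : ∑ x : ZMod p, χ (a * x ^ 2 + 1) = - χ a := by
    rw [hA]
    have : ∀ t : ZMod p, (χ t + 1) * χ (a * t + 1)
        = χ t * χ (a * t + 1) + χ (a * t + 1) := fun t => by ring
    simp only [this]
    rw [Finset.sum_add_distrib, hB, hC, add_zero]
  -- put everything together
  rw [step1]
  push_cast
  calc (∑ x : ZMod p, ((univ.filter (fun y : ZMod p => y ^ 2 = a * x ^ 2 + 1)).card : ℤ))
      = ∑ x : ZMod p, (χ (a * x ^ 2 + 1) + 1) := by
        exact Finset.sum_congr rfl fun x _ => hcard _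
    _ = (∑ x : ZMod p, χ (a * x ^ 2 + 1)) + (Fintype.card (ZMod p) : ℤ) := by
        rw [Finset.sum_add_distrib]; simp
    _ = (p : ℤ) - χ a := by
        rw [key, ZMod.card p]; ring

end QuadCurveAux

/-- For an odd prime `p` and nonzero `a ∈ 𝔽_p`, the solution set
`S = {(x,y) : y² = a·x² + 1}` with the addition law is cyclic: some `g ∈ S` generates
every element of `S` from the identity `(0,1)` by iterated addition. Moreover
`|S| = p − (a/p)`, the Legendre symbol being taken of any integer lift of `a`. -/
theorem quadratic_group_cyclic_card (p : ℕ) [Fact p.Prime] (hp : p ≠ 2)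
    (a : ZMod p) (ha : a ≠ 0) :
    let add : ZMod p × ZMod p → ZMod p × ZMod p → ZMod p × ZMod p :=
      fun P Q => (P.1 * Q.2 + P.2 * Q.1, P.2 * Q.2 + a * P.1 * Q.1)
    let S : Finset (ZMod p × ZMod p) :=
      Finset.univ.filter (fun P : ZMod p × ZMod p => P.2 ^ 2 = a * P.1 ^ 2 + 1)
    (∃ g ∈ S, ∀ Q ∈ S, ∃ k : ℕ,
        Q = (fun P => add P g)^[k] ((0 : ZMod p), (1 : ZMod p))) ∧
    (∀ b : ℤ, (b : ZMod p) = a → (S.card : ℤ) = (p : ℤ) - legendreSym p b) := by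
  intro add S
  constructor
  · haveI : IsCyclic (QPt a) := QPt.isCyclic a hp ha
    obtain ⟨g, hg⟩ := IsCyclic.exists_monoid_generator (α := QPt a)
    refine ⟨g.val, Finset.mem_filter.mpr ⟨Finset.mem_univ _, g.prop⟩, ?_⟩
    intro Q hQ
    have hQ' : Q.2 ^ 2 = a * Q.1 ^ 2 + 1 := (Finset.mem_filter.mp hQ).2
    obtain ⟨k, hk⟩ := hg ⟨Q, hQ'⟩
    have hk' : g ^ k = ⟨Q, hQ'⟩ := hk
    refine ⟨k, ?_⟩
    have key : ∀ n : ℕ, (fun P => add P g.val)^[n] ((0 : ZMod p), (1 : ZMod p))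
        = ((g ^ n : QPt a)).val := by
      intro n
      induction n with
      | zero => rfl
      | succ n ih => rw [Function.iterate_succ_apply', ih, pow_succ]; rfl
    rw [key k, hk']
  · intro b hb
    have : legendreSym p b = quadraticChar (ZMod p) a := by
      rw [legendreSym, hb]
    rw [this]
    exact qpt_card a hp ha
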